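/- arXiv:1505.01961 — 2 statements merged into one kernel-verified Lean document; each statement's English description precedes it below -/
import Mathlib

section
/- Let X be the admissible frame (2+n, a, b, ...) with n ≥ 0, and let Y = (2, a-n, b, ...) be its right progenitor, with k the number of Dyck paths having frame Y. Then the number of Dyck paths with frame X equals k · C(a-1, a-n-1). -/
/-- A step of a Dyck path: `true` = up step (1,1), `false` = down step (1,-1). -/
def dstep (b : Bool) : ℤ := if b then 1 else -1

/-- Height of the path after its first `k` steps. -/
def dheight (p : List Bool) (k : ℕ) : ℤ := ((p.take k).map dstep).sum

/-- A Dyck path: ends at height 0 and never goes below the x-axis. -/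
def IsDyck (p : List Bool) : Prop :=
  (p.map dstep).sum = 0 ∧ ∀ k, 0 ≤ dheight p k

/-- Number of lattice points of the path at level `l` (its "feet" at level `l`). -/
def feet (p : List Bool) (l : ℤ) : ℕ :=
  ((List.range (p.length + 1)).map (dheight p)).count l

/-- The frame of a Dyck path: at position `k`, the number of its points at height `k`. -/
def frame (p : List Bool) : ℕ → ℕ := fun k => feet p (k : ℤ)

/-- `DyckFeet m l j` = number of Dyck paths of length `m` with exactly `j` points at level `l`. -/
noncomputable def DyckFeet (m : ℕ) (l : ℤ) (j : ℕ) : ℕ :=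
  Set.ncard {p : List Bool | p.length = m ∧ IsDyck p ∧ feet p l = j}

/-- A sequence is admissible if it is the frame of some Dyck path. -/
def Admissible (I : ℕ → ℕ) : Prop := ∃ p : List Bool, IsDyck p ∧ frame p = I

@[simp] lemma dheight_zero (p : List Bool) : dheight p 0 = 0 := rfl

@[simp] lemma dheight_nil (k : ℕ) : dheight [] k = 0 := by simp [dheight]

lemma dheight_of_le {p : List Bool} {k : ℕ} (h : p.length ≤ k) :
    dheight p k = (p.map dstep).sum := by
  simp [dheight, List.take_of_length_le h]

lemma dheight_append (p q : List Bool) (k : ℕ) :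
    dheight (p ++ q) k = dheight p k + dheight q (k - p.length) := by
  simp [dheight, List.take_append]

lemma dheight_cons (a : Bool) (p : List Bool) (k : ℕ) :
    dheight (a :: p) (k + 1) = dstep a + dheight p k := by
  simp [dheight]

lemma feet_eq_count (p : List Bool) (l : ℤ) :
    feet p l = ((List.range (p.length + 1)).map (dheight p)).count l := rfl

lemma feet_nil (l : ℤ) : feet [] l = if l = 0 then 1 else 0 := by
  have h : (List.range (([] : List Bool).length + 1)).map (dheight []) = [0] := by
    simp [List.range_succ]
  rw [feet_eq_count, h, List.count_singleton']
  exact if_congr eq_comm rfl rfl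

lemma feet_append {p : List Bool} (hp : (p.map dstep).sum = 0) (q : List Bool) (l : ℤ) :
    feet (p ++ q) l + (if l = 0 then 1 else 0) = feet p l + feet q l := by
  have hlen : (p ++ q).length + 1 = (p.length + 1) + q.length := by
    simp [List.length_append]; ring
  have h1 : (List.range ((p ++ q).length + 1)).map (dheight (p ++ q)) =
      (List.range (p.length + 1)).map (dheight p) ++
        (List.range q.length).map (fun j => dheight q (j + 1)) := by
    rw [hlen, List.range_add, List.map_append, List.map_map]
    congr 1
    · apply List.map_congr_left
      intro k hk
      rw [List.mem_range] at hk
      rw [dheight_append]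
      have : k - p.length = 0 := by omega
      rw [this]; simp
    · apply List.map_congr_left
      intro j hj
      simp only [Function.comp]
      rw [dheight_append, dheight_of_le (by omega), hp]
      have : p.length + 1 + j - p.length = j + 1 := by omega
      rw [this]; ring
  have h3 : feet q l = (if l = 0 then 1 else 0) +
      ((List.range q.length).map (fun j => dheight q (j + 1))).count l := by
    rw [feet_eq_count, List.range_succ_eq_map, List.map_cons, List.map_map, List.count_cons]
    have : dheight q ∘ Nat.succ = fun j => dheight q (j + 1) := rfl
    rw [this]
    simp only [dheight_zero, beq_iff_eq]
    by_cases hl : l = 0 <;> simp [hl] <;> omega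
  rw [feet_eq_count, h1, List.count_append, h3]
  have : ((List.range (p.length + 1)).map (dheight p)).count l = feet p l := rfl
  rw [this]
  ring

def arch (q : List Bool) : List Bool := true :: (q ++ [false])

def joinArches (L : List (List Bool)) : List Bool := (L.map arch).flatten

@[simp] lemma arch_length (q : List Bool) : (arch q).length = q.length + 2 := by
  simp [arch]

lemma dheight_arch_succ (q : List Bool) (j : ℕ) :
    dheight (arch q) (j + 1) = 1 + dheight (q ++ [false]) j := by
  rw [arch, dheight_cons]; simp [dstep]

lemma feet_arch {q : List Bool} (hq : (q.map dstep).sum = 0) (l : ℤ) :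
    feet (arch q) l = feet q (l - 1) + (if l = 0 then 2 else 0) := by
  have key : List.map (dheight (arch q) ∘ Nat.succ) (List.range (q.length + 2)) =
      (List.range (q.length + 1)).map (fun j => 1 + dheight q j) ++ [0] := by
    have hr : List.range (q.length + 2) = List.range (q.length + 1) ++ [q.length + 1] := by
      rw [List.range_succ]
    rw [hr, List.map_append]
    congr 1
    · apply List.map_congr_left
      intro j hj
      rw [List.mem_range] at hj
      simp only [Function.comp]
      rw [show Nat.succ j = j + 1 from rfl, dheight_arch_succ, dheight_append]
      have : j - q.length = 0 := by omega
      rw [this]; simp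
    · simp only [List.map_cons, List.map_nil, Function.comp]
      rw [show Nat.succ (q.length + 1) = (q.length + 1) + 1 from rfl, dheight_arch_succ,
        dheight_append, dheight_of_le (show q.length ≤ q.length + 1 by omega), hq]
      have h1 : q.length + 1 - q.length = 1 := by omega
      norm_num [h1, dheight, dstep]
  have h1 : (List.range ((arch q).length + 1)).map (dheight (arch q)) =
      0 :: (((List.range (q.length + 1)).map (fun j => 1 + dheight q j)) ++ [0]) := by
    rw [arch_length, List.range_succ_eq_map, List.map_cons, List.map_map, key]
    congr 1
  have h2 : ((List.range (q.length + 1)).map (fun j => 1 + dheight q j)).count l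
      = feet q (l - 1) := by
    have e : (List.range (q.length + 1)).map (fun j => 1 + dheight q j) =
        ((List.range (q.length + 1)).map (dheight q)).map (fun x => 1 + x) := by
      rw [List.map_map]; rfl
    rw [e]
    have hinj : Function.Injective (fun x : ℤ => 1 + x) := fun a b h => by
      simpa using h
    have hc := List.count_map_of_injective ((List.range (q.length + 1)).map (dheight q))
      (fun x : ℤ => 1 + x) hinj (l - 1)
    have hl : 1 + (l - 1) = l := by ring
    rw [hl] at hc
    rw [hc, feet_eq_count]
  rw [feet_eq_count, h1, List.count_cons, List.count_append, List.count_singleton', h2]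
  simp only [beq_iff_eq]
  by_cases hl : l = 0 <;> simp [hl, eq_comm] <;> omega

lemma isDyck_nil : IsDyck [] := ⟨rfl, fun k => by simp⟩

lemma isDyck_append {p q : List Bool} (hp : IsDyck p) (hq : IsDyck q) : IsDyck (p ++ q) := by
  constructor
  · rw [List.map_append, List.sum_append, hp.1, hq.1]; ring
  · intro k
    rw [dheight_append]
    exact add_nonneg (hp.2 k) (hq.2 _)

lemma arch_sum {q : List Bool} (hq : (q.map dstep).sum = 0) :
    ((arch q).map dstep).sum = 0 := by
  simp [arch, dstep, hq]

lemma isDyck_arch {q : List Bool} (hq : IsDyck q) : IsDyck (arch q) := by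
  refine ⟨arch_sum hq.1, fun k => ?_⟩
  cases k with
  | zero => simp
  | succ j =>
    rw [dheight_arch_succ, dheight_append]
    have h1 : 0 ≤ dheight q j := hq.2 j
    have h2 : -1 ≤ dheight [false] (j - q.length) := by
      rcases Nat.eq_zero_or_pos (j - q.length) with h | h
      · rw [h]; simp
      · rw [dheight_of_le (by simp; omega)]
        simp [dstep]
    omega

lemma isDyck_joinArches {L : List (List Bool)} (hL : ∀ q ∈ L, IsDyck q) :
    IsDyck (joinArches L) := by
  induction L with
  | nil => exact isDyck_nil
  | cons q L ih =>
    have : joinArches (q :: L) = arch q ++ joinArches L := rfl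
    rw [this]
    exact isDyck_append (isDyck_arch (hL q (by simp)))
      (ih fun r hr => hL r (by simp [hr]))

lemma joinArches_cons (q : List Bool) (L : List (List Bool)) :
    joinArches (q :: L) = arch q ++ joinArches L := rfl

@[simp] lemma joinArches_nil : joinArches [] = [] := rfl

lemma joinArches_append (L M : List (List Bool)) :
    joinArches (L ++ M) = joinArches L ++ joinArches M := by
  simp [joinArches]

/-- Inner heights of an arch prefix are positive. -/
lemma dheight_arch_pos {a : List Bool} (ha : IsDyck a) {m : ℕ}
    (h0 : 0 < m) (hm : m < a.length + 2) (A : List Bool) :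
    0 < dheight (arch a ++ A) m := by
  obtain ⟨j, rfl⟩ : ∃ j, m = j + 1 := ⟨m - 1, by omega⟩
  rw [dheight_append]
  have hj : j + 1 - (arch a).length = 0 := by simp; omega
  rw [hj, dheight_zero, add_zero, dheight_arch_succ, dheight_append]
  have h1 : 0 ≤ dheight a j := ha.2 j
  have h2 : dheight [false] (j - a.length) = 0 := by
    have : j - a.length = 0 := by simp at hm; omega
    rw [this]; simp
  omega

lemma dheight_arch_end {a : List Bool} (ha : IsDyck a) (A : List Bool) :
    dheight (arch a ++ A) (a.length + 2) = dheight A 0 + 0 := by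
  rw [dheight_append]
  have h1 : a.length + 2 - (arch a).length = 0 := by simp
  rw [h1, dheight_of_le (by simp), arch_sum ha.1]
  simp

lemma dheight_take (p : List Bool) (k m : ℕ) :
    dheight (p.take k) m = dheight p (min m k) := by
  simp [dheight, List.take_take]

lemma arch_cancel {a b A B : List Bool} (ha : IsDyck a) (hb : IsDyck b)
    (h : arch a ++ A = arch b ++ B) : a = b ∧ A = B := by
  have hlen : a.length = b.length := by
    by_contra hne
    rcases Nat.lt_or_ge a.length b.length with hlt | hge
    · have h1 : dheight (arch a ++ A) (a.length + 2) = dheight A 0 + 0 :=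
        dheight_arch_end ha A
      have h2 : 0 < dheight (arch b ++ B) (a.length + 2) :=
        dheight_arch_pos hb (by omega) (by omega) B
      rw [h] at h1
      simp [dheight_zero] at h1
      omega
    · have hlt : b.length < a.length := by omega
      have h1 : dheight (arch b ++ B) (b.length + 2) = dheight B 0 + 0 :=
        dheight_arch_end hb B
      have h2 : 0 < dheight (arch a ++ A) (b.length + 2) :=
        dheight_arch_pos ha (by omega) (by omega) A
      rw [← h] at h1
      simp [dheight_zero] at h1
      omega
  have harch : arch a = arch b := by
    have e1 : (arch a ++ A).take (arch a).length = arch a := List.take_left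
    have e2 : (arch b ++ B).take (arch b).length = arch b := List.take_left
    have e3 : (arch a).length = (arch b).length := by simp [hlen]
    rw [h, e3, e2] at e1
    exact e1.symm
  constructor
  · have := harch
    simp only [arch, List.cons.injEq, true_and] at this
    exact (List.append_left_inj _).mp this
  · rw [harch] at h
    exact List.append_cancel_left h

lemma exists_decomp_aux :
    ∀ N (p : List Bool), p.length ≤ N → IsDyck p →
      ∃ L, (∀ q ∈ L, IsDyck q) ∧ p = joinArches L := by
  intro N
  induction N with
  | zero =>
    intro p hp _
    have : p = [] := List.length_eq_zero_iff.mp (by omega)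
    exact ⟨[], by simp, by simp [this]⟩
  | succ N ih =>
    intro p hp hd
    rcases eq_or_ne p [] with rfl | hne
    · exact ⟨[], by simp, by simp⟩
    have hlp : 0 < p.length := List.length_pos_iff.mpr hne
    have hex : ∃ k, 0 < k ∧ dheight p k = 0 :=
      ⟨p.length, hlp, by rw [dheight_of_le (le_refl _)]; exact hd.1⟩
    obtain ⟨k, ⟨hkpos, hk0⟩, hmin⟩ :
        ∃ k, (0 < k ∧ dheight p k = 0) ∧ ∀ m, m < k → ¬(0 < m ∧ dheight p m = 0) :=
      ⟨Nat.find hex, Nat.find_spec hex, fun m hm => Nat.find_min hex hm⟩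
    have hkle : k ≤ p.length := by
      by_contra hgt
      exact hmin p.length (by omega) ⟨hlp, by rw [dheight_of_le (le_refl _)]; exact hd.1⟩
    set A := p.take k with hA
    set r := p.drop k with hr
    have hpar : p = A ++ r := (List.take_append_drop k p).symm
    have hlenA : A.length = k := by rw [hA, List.length_take]; omega
    have hsumA : (A.map dstep).sum = 0 := hk0
    have hsumr : (r.map dstep).sum = 0 := by
      have := hd.1
      rw [hpar, List.map_append, List.sum_append] at this
      rw [hsumA] at this; linarith
    have hdr : IsDyck r := by
      refine ⟨hsumr, fun j => ?_⟩
      have := hd.2 (k + j)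
      rw [hpar, dheight_append, hlenA] at this
      have hAfull : dheight A (k + j) = 0 := by
        rw [dheight_of_le (by omega), hsumA]
      rw [hAfull, show k + j - k = j by omega] at this
      linarith
    -- dheight of prefix agreement
    have hAq : ∀ m, m ≤ k → dheight A m = dheight p m := by
      intro m hm
      rw [hA, dheight_take, min_eq_left hm]
    -- structure of A
    have hk2 : 2 ≤ k := by
      by_contra hk1
      have hk1' : k = 1 := by omega
      have h1 : dheight p 1 = 0 := by rw [← hk1']; exact hk0
      cases hp1 : p with
      | nil => exact hne hp1
      | cons c t =>
        rw [hp1] at h1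
        rw [dheight_cons] at h1
        simp only [dheight_zero, add_zero] at h1
        have h2 := hd.2 1
        cases c <;> simp [dstep] at h1
    obtain ⟨c, t, hAct⟩ : ∃ c t, A = c :: t := by
      cases hAc : A with
      | nil => exfalso; rw [hAc] at hlenA; simp at hlenA; omega
      | cons c t => exact ⟨c, t, rfl⟩
    have hc : c = true := by
      have h1 : dheight A 1 = dheight p 1 := hAq 1 (by omega)
      rw [hAct, dheight_cons] at h1
      simp only [dheight_zero, add_zero] at h1
      have h2 := hd.2 1
      have h3 : ¬(0 < 1 ∧ dheight p 1 = 0) := hmin 1 (by omega)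
      cases c
      · simp [dstep] at h1; omega
      · rfl
    have htne : t ≠ [] := by
      intro h
      rw [hAct, h, hc] at hsumA
      simp [dstep] at hsumA
    obtain ⟨q, e, hte⟩ : ∃ q e, t = q ++ [e] :=
      ⟨t.dropLast, t.getLast htne, (List.dropLast_append_getLast htne).symm⟩
    have hAform : A = true :: (q ++ [e]) := by rw [hAct, ← hte, hc]
    have hlq : q.length = k - 2 := by
      have : A.length = q.length + 2 := by rw [hAform]; simp
      omega
    -- heights inside A
    have hinner : ∀ j, j + 1 ≤ k → dheight A (j + 1) = 1 + dheight (q ++ [e]) j := by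
      intro j hj
      rw [hAform, dheight_cons]
      simp [dstep]
    have hpk1 : 0 < dheight p (k - 1) := by
      have h3 := hmin (k - 1) (by omega)
      have h4 := hd.2 (k - 1)
      rw [not_and_or] at h3
      rcases h3 with h3 | h3
      · omega
      · omega
    have hsumq : (q.map dstep).sum = 0 ∧ e = false := by
      have h1 : dheight A (k - 1) = dheight p (k - 1) := hAq _ (by omega)
      have h2 : dheight A (k - 1) = 1 + ((q.map dstep).sum + 0) := by
        rw [show k - 1 = (k - 2) + 1 by omega, hinner _ (by omega), dheight_append]
        rw [dheight_of_le (by omega), show k - 2 - q.length = 0 by omega]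
        simp
      -- sum A = 0
      have h3 : (A.map dstep).sum = 1 + ((q.map dstep).sum + dstep e) := by
        rw [hAform]
        simp [dstep]
      rw [hsumA] at h3
      have h5 : 1 + ((q.map dstep).sum + 0) = dheight p (k - 1) := by rw [← h2, h1]
      have h6 : 0 ≤ (q.map dstep).sum := by omega
      cases e
      · rw [show dstep false = -1 from rfl] at h3
        exact ⟨by omega, rfl⟩
      · rw [show dstep true = 1 from rfl] at h3
        exfalso; omega
    obtain ⟨hq0, rfl⟩ := hsumq
    have hdq : IsDyck q := by
      refine ⟨hq0, fun j => ?_⟩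
      rcases Nat.lt_or_ge j q.length with hj | hj
      · have h1 : dheight A (j + 1) = dheight p (j + 1) := hAq _ (by omega)
        have h2 : dheight A (j + 1) = 1 + (dheight q j + 0) := by
          rw [hinner _ (by omega), dheight_append, show j - q.length = 0 by omega]
          simp
        have h3 := hmin (j + 1) (by omega)
        have h4 := hd.2 (j + 1)
        rw [not_and_or] at h3
        rcases h3 with h3 | h3
        · omega
        · omega
      · rw [dheight_of_le hj, hq0]
    have hArch : A = arch q := by rw [hAform]; rfl
    have hrlen : r.length ≤ N := by
      rw [hr, List.length_drop]; omega
    obtain ⟨L, hL1, hL2⟩ := ih r hrlen hdr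
    exact ⟨q :: L, by
      intro x hx
      rcases List.mem_cons.mp hx with rfl | hx
      · exact hdq
      · exact hL1 x hx, by
      rw [hpar, hArch, hL2, joinArches_cons]⟩

lemma exists_decomp {p : List Bool} (hd : IsDyck p) :
    ∃ L, (∀ q ∈ L, IsDyck q) ∧ p = joinArches L :=
  exists_decomp_aux p.length p (le_refl _) hd

lemma decomp_unique : ∀ (L M : List (List Bool)), (∀ q ∈ L, IsDyck q) → (∀ q ∈ M, IsDyck q) →
    joinArches L = joinArches M → L = M := by
  intro L
  induction L with
  | nil =>
    intro M _ _ h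
    cases M with
    | nil => rfl
    | cons b M => simp [joinArches_cons, joinArches, arch] at h
  | cons a L ih =>
    intro M hL hM h
    cases M with
    | nil => simp [joinArches_cons, joinArches, arch] at h
    | cons b M =>
      rw [joinArches_cons, joinArches_cons] at h
      obtain ⟨h1, h2⟩ := arch_cancel (hL a (by simp)) (hM b (by simp)) h
      rw [h1, ih M (fun r hr => hL r (by simp [hr])) (fun r hr => hM r (by simp [hr])) h2]

open Classical in
noncomputable def inners (p : List Bool) : List (List Bool) :=
  if h : IsDyck p then (exists_decomp h).choose else []

lemma inners_spec {p : List Bool} (h : IsDyck p) :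
    (∀ q ∈ inners p, IsDyck q) ∧ p = joinArches (inners p) := by
  rw [inners, dif_pos h]
  exact (exists_decomp h).choose_spec

lemma inners_eq {p : List Bool} (h : IsDyck p) {L : List (List Bool)}
    (hL : ∀ q ∈ L, IsDyck q) (hp : p = joinArches L) : inners p = L := by
  obtain ⟨h1, h2⟩ := inners_spec h
  exact decomp_unique _ _ h1 hL (by rw [← h2, ← hp])

lemma inners_joinArches {L : List (List Bool)} (hL : ∀ q ∈ L, IsDyck q) :
    inners (joinArches L) = L :=
  inners_eq (isDyck_joinArches hL) hL rfl

lemma feet_neg {p : List Bool} (hp : ∀ k, 0 ≤ dheight p k) {l : ℤ} (hl : l < 0) :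
    feet p l = 0 := by
  rw [feet_eq_count, List.count_eq_zero]
  intro h
  rw [List.mem_map] at h
  obtain ⟨k, _, hk⟩ := h
  have := hp k
  omega

lemma feet_joinArches {L : List (List Bool)} (hL : ∀ q ∈ L, IsDyck q) (l : ℤ) :
    feet (joinArches L) l =
      (if l = 0 then L.length + 1 else 0) + (L.map (fun q => feet q (l - 1))).sum := by
  induction L with
  | nil =>
    rw [joinArches_nil, feet_nil]
    by_cases hl : l = 0 <;> simp [hl]
  | cons q L ih =>
    have hq := hL q (by simp)
    have hL' : ∀ r ∈ L, IsDyck r := fun r hr => hL r (by simp [hr])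
    rw [joinArches_cons]
    have h1 := feet_append (arch_sum hq.1) (joinArches L) l
    rw [feet_arch hq.1, ih hL'] at h1
    have h2 : (List.map (fun q => feet q (l - 1)) (q :: L)).sum =
        feet q (l - 1) + (List.map (fun q => feet q (l - 1)) L).sum := by simp
    rw [h2]
    by_cases hl : l = 0 <;> simp [hl] at h1 ⊢ <;> omega

lemma feet_zero_joinArches {L : List (List Bool)} (hL : ∀ q ∈ L, IsDyck q) :
    feet (joinArches L) 0 = L.length + 1 := by
  rw [feet_joinArches hL, if_pos rfl]
  have : ∀ q ∈ L, feet q (-1 : ℤ) = 0 := fun q hq =>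
    feet_neg (hL q hq).2 (by omega)
  have hz : (L.map (fun q => feet q ((0:ℤ) - 1))).sum = 0 := by
    apply List.sum_eq_zero
    intro x hx
    rw [List.mem_map] at hx
    obtain ⟨q, hq, rfl⟩ := hx
    simpa using this q hq
  rw [hz]

lemma feet_pos_joinArches {L : List (List Bool)} (hL : ∀ q ∈ L, IsDyck q) {l : ℤ}
    (hl : l ≠ 0) : feet (joinArches L) l = (L.map (fun q => feet q (l - 1))).sum := by
  rw [feet_joinArches hL, if_neg hl, zero_add]

lemma feet_join {L : List (List Bool)} (hL : ∀ q ∈ L, IsDyck q) (l : ℤ) :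
    feet L.flatten l + (if l = 0 then L.length else 0) =
      (if l = 0 then 1 else 0) + (L.map (fun q => feet q l)).sum := by
  induction L with
  | nil =>
    rw [List.flatten_nil, feet_nil]
    by_cases hl : l = 0 <;> simp [hl]
  | cons q L ih =>
    have hq := hL q (by simp)
    have hL' : ∀ r ∈ L, IsDyck r := fun r hr => hL r (by simp [hr])
    rw [List.flatten_cons]
    have h1 := feet_append hq.1 L.flatten l
    have ih' := ih hL'
    have h2 : (List.map (fun q => feet q l) (q :: L)).sum =
        feet q l + (List.map (fun q => feet q l) L).sum := by simp
    rw [h2]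
    by_cases hl : l = 0 <;> simp [hl] at h1 ih' ⊢ <;> omega

lemma isDyck_flatten {L : List (List Bool)} (hL : ∀ q ∈ L, IsDyck q) :
    IsDyck L.flatten := by
  induction L with
  | nil => exact isDyck_nil
  | cons q L ih =>
    rw [List.flatten_cons]
    exact isDyck_append (hL q (by simp)) (ih fun r hr => hL r (by simp [hr]))

lemma feet_zero_pos {p : List Bool} : 1 ≤ feet p 0 := by
  rw [feet_eq_count]
  apply List.count_pos_iff.mpr
  rw [List.mem_map]
  exact ⟨0, by simp, by simp⟩

lemma inners_append {p q : List Bool} (hp : IsDyck p) (hq : IsDyck q) :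
    inners (p ++ q) = inners p ++ inners q := by
  obtain ⟨h1, h2⟩ := inners_spec hp
  obtain ⟨h3, h4⟩ := inners_spec hq
  apply inners_eq (isDyck_append hp hq)
  · intro r hr
    rcases List.mem_append.mp hr with h | h
    · exact h1 r h
    · exact h3 r h
  · rw [joinArches_append, ← h2, ← h4]

lemma inners_flatten {L : List (List Bool)} (hL : ∀ q ∈ L, IsDyck q) :
    inners L.flatten = (L.map inners).flatten := by
  induction L with
  | nil =>
    simp only [List.flatten_nil, List.map_nil]
    exact inners_eq isDyck_nil (L := []) (by simp) (by simp)
  | cons q L ih =>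
    rw [List.flatten_cons, List.map_cons, List.flatten_cons,
      inners_append (hL q (by simp)) (isDyck_flatten fun r hr => hL r (by simp [hr])),
      ih fun r hr => hL r (by simp [hr])]

def chunks {α : Type*} : List ℕ → List α → List (List α)
  | [], _ => []
  | k :: ks, R => R.take k :: chunks ks (R.drop k)

@[simp] lemma chunks_nil {α : Type*} (R : List α) : chunks [] R = [] := rfl

@[simp] lemma chunks_cons {α : Type*} (k : ℕ) (ks : List ℕ) (R : List α) :
    chunks (k :: ks) R = R.take k :: chunks ks (R.drop k) := rfl

lemma chunks_length {α : Type*} (c : List ℕ) (R : List α) :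
    (chunks c R).length = c.length := by
  induction c generalizing R with
  | nil => rfl
  | cons k ks ih => simp [ih]

lemma chunks_flatten {α : Type*} (c : List ℕ) (R : List α) :
    (chunks c R).flatten = R.take c.sum := by
  induction c generalizing R with
  | nil => simp
  | cons k ks ih =>
    rw [chunks_cons, List.flatten_cons, ih, List.sum_cons, List.take_add]

lemma chunks_map_length {α : Type*} {c : List ℕ} {R : List α} (h : c.sum ≤ R.length) :
    (chunks c R).map List.length = c := by
  induction c generalizing R with
  | nil => rfl
  | cons k ks ih =>
    rw [List.sum_cons] at h
    rw [chunks_cons, List.map_cons, List.length_take,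
      min_eq_left (by omega), ih (by simp; omega)]

lemma chunks_mem {α : Type*} {c : List ℕ} {R : List α} {S : List α}
    (hS : S ∈ chunks c R) {x : α} (hx : x ∈ S) : x ∈ R := by
  induction c generalizing R with
  | nil => simp at hS
  | cons k ks ih =>
    rw [chunks_cons, List.mem_cons] at hS
    rcases hS with rfl | hS
    · exact List.mem_of_mem_take hx
    · exact List.mem_of_mem_drop (ih hS)

lemma chunks_of_map_length {α : Type*} (M : List (List α)) :
    chunks (M.map List.length) M.flatten = M := by
  induction M with
  | nil => rfl
  | cons S M ih =>
    rw [List.map_cons, List.flatten_cons, chunks_cons, List.take_left, List.drop_left, ih]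

lemma map_sum_flatten {α : Type*} (M : List (List α)) (f : α → ℕ) :
    ((M.flatten.map f).sum) = (M.map (fun S => (S.map f).sum)).sum := by
  induction M with
  | nil => rfl
  | cons S M ih =>
    simp only [List.flatten_cons, List.map_append, List.sum_append, List.map_cons,
      List.sum_cons, ih]

lemma ncard_compositions (n m : ℕ) :
    Set.ncard {c : List ℕ | c.length = n + 1 ∧ c.sum = m} = (m + n).choose m := by
  rw [← Nat.card_coe_set_eq]
  have e1 : {c : List ℕ | c.length = n + 1 ∧ c.sum = m} ≃ {P : Fin (n + 1) → ℕ // ∑ i, P i = m} := by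
    refine Equiv.ofBijective (fun c => ⟨fun i => c.val.get (Fin.cast c.prop.1.symm i), ?_⟩) ⟨?_, ?_⟩
    · obtain ⟨c, hc1, hc2⟩ := c
      subst hc2
      have : List.ofFn (fun i => c.get (Fin.cast hc1.symm i)) = c := by
        apply List.ext_getElem
        · simp [hc1]
        · intro j h1 h2
          simp only [List.getElem_ofFn]
          rfl
      calc ∑ i, c.get (Fin.cast hc1.symm i)
              = (List.ofFn (fun i => c.get (Fin.cast hc1.symm i))).sum := List.sum_ofFn.symm
          _ = c.sum := by rw [this]
    · intro c d h
      simp only [Subtype.mk.injEq] at h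
      apply Subtype.ext
      apply List.ext_getElem (by rw [c.prop.1, d.prop.1])
      intro j h1 h2
      have := congrFun h ⟨j, by rw [← c.prop.1]; exact h1⟩
      simpa using this
    · rintro ⟨P, hP⟩
      refine ⟨⟨List.ofFn P, by simp, by rw [List.sum_ofFn]; exact hP⟩, ?_⟩
      apply Subtype.ext
      funext i
      simp only [List.get_eq_getElem, List.getElem_ofFn]
      exact congrArg P (Fin.ext rfl)
  rw [Nat.card_congr e1, Nat.card_congr (Sym.equivNatSumOfFintype (Fin (n + 1)) m).symm,
    Nat.card_eq_fintype_card, Sym.card_sym_eq_choose]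
  simp only [Fintype.card_fin]
  congr 1
  omega

lemma sum_map_add_one {α : Type*} (M : List α) (f : α → ℕ) :
    (M.map (fun x => f x + 1)).sum = (M.map f).sum + M.length := by
  induction M with
  | nil => rfl
  | cons x M ih => simp [ih]; omega

lemma flatten_map_joinArches (M : List (List (List Bool))) :
    (M.map joinArches).flatten = joinArches M.flatten := by
  induction M with
  | nil => rfl
  | cons S M ih => rw [List.map_cons, List.flatten_cons, List.flatten_cons,
      joinArches_append, ih]

lemma arch_injective : Function.Injective arch := by
  intro a b h
  simp only [arch, List.cons.injEq, true_and] at h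
  exact (List.append_left_inj _).mp h

lemma feet_zero_eq_inners {Q : List Bool} (hQ : IsDyck Q) :
    feet Q 0 = (inners Q).length + 1 := by
  obtain ⟨h1, h2⟩ := inners_spec hQ
  conv_lhs => rw [h2]
  exact feet_zero_joinArches h1

/-- The cardinality of an admissible frame X = (2+n, a, b, ...) equals the cardinality of its
right progenitor Y = (2, a-n, b, ...) times the binomial coefficient C(a-1, a-n-1). -/
theorem stmt17 (X : ℕ → ℕ) (n : ℕ) (hX : Admissible X) (h0 : X 0 = 2 + n)
    (Y : ℕ → ℕ) (hY : Y = fun k => if k = 0 then 2 else if k = 1 then X 1 - n else X k) :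
    Set.ncard {p : List Bool | IsDyck p ∧ frame p = X} =
      Set.ncard {p : List Bool | IsDyck p ∧ frame p = Y} *
        Nat.choose (X 1 - 1) (X 1 - n - 1) := by
  -- X 1 ≥ n + 1
  obtain ⟨p0, hp0d, hp0f⟩ := hX
  have ha : n + 1 ≤ X 1 := by
    obtain ⟨hL0d, hL0j⟩ := inners_spec hp0d
    have hlen : (inners p0).length + 1 = 2 + n := by
      rw [← feet_zero_eq_inners hp0d, show feet p0 0 = frame p0 0 from rfl, hp0f, h0]
    have h1 : frame p0 1 = ((inners p0).map (fun q => feet q 0)).sum := by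
      rw [show frame p0 1 = feet p0 1 from rfl]
      conv_lhs => rw [hL0j]
      rw [feet_pos_joinArches hL0d (by norm_num)]
      norm_num
    have h2 : (inners p0).length ≤ ((inners p0).map (fun q => feet q 0)).sum := by
      calc (inners p0).length = ((inners p0).map (fun _ => 1)).sum := by simp
        _ ≤ _ := by
            apply List.sum_le_sum
            intro q hq
            exact feet_zero_pos
    rw [hp0f] at h1
    omega
  set m := X 1 - n - 1 with hmdef
  have hm : X 1 = m + n + 1 := by omega
  -- the three auxiliary sets
  set A' : Set (List (List Bool)) := {L | (∀ q ∈ L, IsDyck q) ∧ L.length = n + 1 ∧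
    ∀ j : ℕ, (L.map (fun q => feet q (j : ℤ))).sum = X (j + 1)} with hA'
  set B' : Set (List Bool) := {Q | IsDyck Q ∧ feet Q 0 = m + 1 ∧
    ∀ j : ℕ, feet Q ((j : ℤ) + 1) = X (j + 2)} with hB'
  set C' : Set (List ℕ) := {c | c.length = n + 1 ∧ c.sum = m} with hC'
  -- Step 1 : A = joinArches '' A'
  have step1 : {p : List Bool | IsDyck p ∧ frame p = X} = joinArches '' A' := by
    ext p
    constructor
    · rintro ⟨hpd, hpf⟩
      obtain ⟨hLd, hLj⟩ := inners_spec hpd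
      refine ⟨inners p, ⟨hLd, ?_, ?_⟩, hLj.symm⟩
      · have : feet p 0 = (inners p).length + 1 := feet_zero_eq_inners hpd
        have h2 : feet p 0 = X 0 := by rw [show feet p 0 = frame p 0 from rfl, hpf]
        omega
      · intro j
        have : feet p ((j : ℤ) + 1) = ((inners p).map (fun q => feet q ((j : ℤ) + 1 - 1))).sum := by
          conv_lhs => rw [hLj]
          exact feet_pos_joinArches hLd (by omega)
        simp only [add_sub_cancel_right] at this
        rw [← this, show ((j : ℤ) + 1) = ((j + 1 : ℕ) : ℤ) by push_cast; ring,
          show feet p ((j + 1 : ℕ) : ℤ) = frame p (j + 1) from rfl, hpf]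
    · rintro ⟨L, ⟨hLd, hLlen, hLsum⟩, rfl⟩
      refine ⟨isDyck_joinArches hLd, ?_⟩
      funext k
      cases k with
      | zero =>
        rw [show frame (joinArches L) 0 = feet (joinArches L) 0 from rfl,
          feet_zero_joinArches hLd, hLlen, h0]
        omega
      | succ j =>
        rw [show frame (joinArches L) (j + 1) = feet (joinArches L) ((j + 1 : ℕ) : ℤ) from rfl]
        rw [show ((j + 1 : ℕ) : ℤ) = (j : ℤ) + 1 by push_cast; ring,
          feet_pos_joinArches hLd (by omega)]
        simp only [add_sub_cancel_right]
        exact hLsum j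
  -- Step 2 : B = arch '' B'
  have step2 : {p : List Bool | IsDyck p ∧ frame p = Y} = arch '' B' := by
    ext p
    constructor
    · rintro ⟨hpd, hpf⟩
      obtain ⟨hLd, hLj⟩ := inners_spec hpd
      have hlen : (inners p).length = 1 := by
        have h1 : feet p 0 = (inners p).length + 1 := feet_zero_eq_inners hpd
        have h2 : feet p 0 = Y 0 := by rw [show feet p 0 = frame p 0 from rfl, hpf]
        rw [hY] at h2
        simp at h2
        omega
      obtain ⟨Q, hQ⟩ := List.length_eq_one_iff.mp hlen
      have hpQ : p = arch Q := by
        rw [hLj, hQ, joinArches_cons, joinArches_nil, List.append_nil]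
      have hQd : IsDyck Q := hLd Q (by rw [hQ]; simp)
      have hfeet : ∀ j : ℕ, feet Q (j : ℤ) = Y (j + 1) := by
        intro j
        have : feet p ((j : ℤ) + 1) = feet Q ((j : ℤ) + 1 - 1) := by
          conv_lhs => rw [hLj, hQ]
          rw [feet_pos_joinArches (by rw [← hQ]; exact hLd) (by omega)]
          simp
        simp only [add_sub_cancel_right] at this
        rw [← this, show ((j : ℤ) + 1) = ((j + 1 : ℕ) : ℤ) by push_cast; ring,
          show feet p ((j + 1 : ℕ) : ℤ) = frame p (j + 1) from rfl, hpf]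
      refine ⟨Q, ⟨hQd, ?_, ?_⟩, hpQ.symm⟩
      · have h1 := hfeet 0
        rw [hY] at h1
        simp at h1
        omega
      · intro j
        have h1 := hfeet (j + 1)
        have h2 : Y (j + 1 + 1) = X (j + 2) := by rw [hY]; norm_num
        rw [h2] at h1
        push_cast at h1
        exact h1
    · rintro ⟨Q, ⟨hQd, hQ0, hQs⟩, rfl⟩
      refine ⟨isDyck_arch hQd, ?_⟩
      funext k
      rw [show frame (arch Q) k = feet (arch Q) (k : ℤ) from rfl, feet_arch hQd.1]
      cases k with
      | zero =>
        rw [hY]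
        have hneg : feet Q (-1 : ℤ) = 0 := feet_neg hQd.2 (by omega)
        simp [hneg]
      | succ j =>
        rw [hY]
        cases j with
        | zero =>
          norm_num [hQ0]
          omega
        | succ i =>
          have h1 := hQs i
          have e1 : ((i + 1 + 1 : ℕ) : ℤ) - 1 = (i : ℤ) + 1 := by push_cast; ring
          have e2 : ¬((i + 1 + 1 : ℕ) : ℤ) = 0 := by push_cast; omega
          rw [if_neg e2, add_zero, e1, h1]
          norm_num
  -- Step 3 : bijection between B' ×ˢ C' and A'
  set ψ : List Bool × List ℕ → List (List Bool) :=
    fun Qc => (chunks Qc.2 (inners Qc.1)).map joinArches with hψ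
  set φ : List (List Bool) → List Bool × List ℕ :=
    fun L => (L.flatten, L.map (fun q => (inners q).length)) with hφ
  have hψmap : Set.MapsTo ψ (B' ×ˢ C') A' := by
    rintro ⟨Q, c⟩ ⟨hQmem, hcmem⟩
    replace hQmem : Q ∈ B' := hQmem
    replace hcmem : c ∈ C' := hcmem
    obtain ⟨hQd, hQ0, hQs⟩ := hQmem
    obtain ⟨hclen, hcsum⟩ := hcmem
    obtain ⟨hRd, hRj⟩ := inners_spec hQd
    have hlenR : (inners Q).length = m := by
      have := feet_zero_eq_inners hQd; omega
    have hdL : ∀ S ∈ chunks c (inners Q), ∀ r ∈ S, IsDyck r :=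
      fun S hS r hr => hRd r (chunks_mem hS hr)
    have htake : (chunks c (inners Q)).flatten = inners Q := by
      rw [chunks_flatten, hcsum, ← hlenR, List.take_of_length_le (le_refl _)]
    refine ⟨?_, ?_, ?_⟩
    · intro q hq
      rw [hψ] at hq
      simp only [List.mem_map] at hq
      obtain ⟨S, hS, rfl⟩ := hq
      exact isDyck_joinArches (hdL S hS)
    · rw [hψ]
      simp only [List.length_map, chunks_length, hclen]
    · intro j
      rw [hψ]
      simp only [List.map_map]
      cases j with
      | zero =>
        have h1 : (chunks c (inners Q)).map ((fun q => feet q ((0:ℕ):ℤ)) ∘ joinArches) =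
            (chunks c (inners Q)).map (fun S => S.length + 1) :=
          List.map_congr_left fun S hS => by
            simp only [Function.comp, Nat.cast_zero]
            exact feet_zero_joinArches (hdL S hS)
        rw [h1, sum_map_add_one, chunks_map_length (by omega), chunks_length, hclen, hcsum]
        norm_num
        omega
      | succ j =>
        have h1 : (chunks c (inners Q)).map ((fun q => feet q ((j+1:ℕ):ℤ)) ∘ joinArches) =
            (chunks c (inners Q)).map (fun S => (S.map (fun r => feet r (j:ℤ))).sum) :=
          List.map_congr_left fun S hS => by
            simp only [Function.comp]
            rw [show ((j+1:ℕ):ℤ) = (j:ℤ) + 1 by push_cast; ring,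
              feet_pos_joinArches (hdL S hS) (by omega)]
            simp
        rw [h1, ← map_sum_flatten, htake]
        have h2 : feet Q ((j:ℤ) + 1) = ((inners Q).map (fun r => feet r (j:ℤ))).sum := by
          conv_lhs => rw [hRj]
          rw [feet_pos_joinArches hRd (by omega)]
          simp
        rw [← h2, hQs j]
  have hφmap : Set.MapsTo φ A' (B' ×ˢ C') := by
    rintro L ⟨hLd, hLlen, hLsum⟩
    have hQd : IsDyck L.flatten := isDyck_flatten hLd
    have hsum0 : (L.map (fun q => feet q (0:ℤ))).sum = X 1 := by
      have := hLsum 0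
      simpa using this
    have hjoin0 : feet L.flatten 0 + L.length = 1 + (L.map (fun q => feet q (0:ℤ))).sum := by
      have := feet_join hLd 0
      simpa using this
    have hc : (L.map (fun q => (inners q).length)).sum = m := by
      have h1 : L.map (fun q => feet q (0:ℤ)) = L.map (fun q => (inners q).length + 1) :=
        List.map_congr_left fun q hq => feet_zero_eq_inners (hLd q hq)
      rw [h1, sum_map_add_one] at hsum0
      omega
    have hQ0 : feet L.flatten 0 = m + 1 := by omega
    have hQs : ∀ j : ℕ, feet L.flatten ((j:ℤ) + 1) = X (j + 2) := by
      intro j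
      have hjoin := feet_join hLd ((j:ℤ) + 1)
      rw [if_neg (by omega), if_neg (by omega), add_zero, zero_add] at hjoin
      have := hLsum (j + 1)
      rw [show ((j+1:ℕ):ℤ) = (j:ℤ) + 1 by push_cast; ring] at this
      rw [hjoin, this]
    exact ⟨⟨hQd, hQ0, hQs⟩, by simp only [hφ, List.length_map, hLlen], hc⟩
  have hinv1 : Set.LeftInvOn φ ψ (B' ×ˢ C') := by
    rintro ⟨Q, c⟩ ⟨hQmem, hcmem⟩
    replace hQmem : Q ∈ B' := hQmem
    replace hcmem : c ∈ C' := hcmem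
    obtain ⟨hQd, hQ0, hQs⟩ := hQmem
    obtain ⟨hclen, hcsum⟩ := hcmem
    obtain ⟨hRd, hRj⟩ := inners_spec hQd
    have hlenR : (inners Q).length = m := by
      have := feet_zero_eq_inners hQd; omega
    have hdL : ∀ S ∈ chunks c (inners Q), ∀ r ∈ S, IsDyck r :=
      fun S hS r hr => hRd r (chunks_mem hS hr)
    have htake : (chunks c (inners Q)).flatten = inners Q := by
      rw [chunks_flatten, hcsum, ← hlenR, List.take_of_length_le (le_refl _)]
    have h1 : ((chunks c (inners Q)).map joinArches).flatten = Q := by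
      rw [flatten_map_joinArches, htake, ← hRj]
    have h2 : ((chunks c (inners Q)).map joinArches).map (fun q => (inners q).length) = c := by
      rw [List.map_map]
      have : (chunks c (inners Q)).map ((fun q => (inners q).length) ∘ joinArches) =
          (chunks c (inners Q)).map List.length :=
        List.map_congr_left fun S hS => by
          simp only [Function.comp]
          rw [inners_joinArches (hdL S hS)]
      rw [this, chunks_map_length (by omega)]
    simp only [hψ, hφ]
    exact Prod.ext h1 h2
  have hinv2 : Set.RightInvOn φ ψ A' := by
    rintro L ⟨hLd, hLlen, hLsum⟩
    simp only [hψ, hφ]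
    have h1 : inners L.flatten = (L.map inners).flatten := inners_flatten hLd
    have h2 : L.map (fun q => (inners q).length) = (L.map inners).map List.length := by
      rw [List.map_map]; rfl
    rw [h1, h2, chunks_of_map_length, List.map_map]
    have : L.map (joinArches ∘ inners) = L.map id :=
      List.map_congr_left fun q hq => by
        simp only [Function.comp, id]
        exact ((inners_spec (hLd q hq)).2).symm
    rw [this, List.map_id]
  have hbij : Set.BijOn ψ (B' ×ˢ C') A' := Set.InvOn.bijOn ⟨hinv1, hinv2⟩ hψmap hφmap
  -- counting
  have hcard1 : Set.ncard {p : List Bool | IsDyck p ∧ frame p = X} = Set.ncard A' := by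
    rw [step1]
    apply Set.ncard_image_of_injOn
    intro L1 h1 L2 h2 heq
    exact decomp_unique L1 L2 h1.1 h2.1 heq
  have hcard2 : Set.ncard {p : List Bool | IsDyck p ∧ frame p = Y} = Set.ncard B' := by
    rw [step2]
    rw [Set.ncard_image_of_injOn (arch_injective.injOn)]
  have hcard3 : Set.ncard A' = Set.ncard (B' ×ˢ C') := by
    rw [← hbij.image_eq, Set.ncard_image_of_injOn hbij.injOn]
  have hcard4 : Set.ncard (B' ×ˢ C') = Set.ncard B' * Set.ncard C' := by
    rw [← Nat.card_coe_set_eq, ← Nat.card_coe_set_eq, ← Nat.card_coe_set_eq,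
      Nat.card_congr (Equiv.Set.prod B' C'), Nat.card_prod]
  have hcard5 : Set.ncard C' = (m + n).choose m := by
    rw [hC']
    exact ncard_compositions n m
  rw [hcard1, hcard2, hcard3, hcard4, hcard5]
  have hch : (m + n).choose m = (X 1 - 1).choose (X 1 - n - 1) := by
    have e1 : m + n = X 1 - 1 := by omega
    have e2 : m = X 1 - n - 1 := by omega
    rw [e1, e2]
  rw [hch]
end

section
/- For a Dyck path with frame (i_0, ..., i_f, 0, ...), the number v_k of up steps joining levels k and k+1 satisfies v_k = i_k - i_{k-1} + i_{k-2} - ... + (-1)^k i_0 + (-1)^{k+1} for 0 ≤ k ≤ f-1; in particular v_k depends only on the frame and not on the particular path. -/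
/-- The number of up steps of a path going from height k to height k+1. -/
def upCount (p : List Bool) (k : ℤ) : ℕ :=
  (List.range p.length).countP (fun i => p.getD i false && decide (dheight p i = k))

/-- The number of down steps of a path starting at height k (going to height k-1). -/
def downCount (p : List Bool) (k : ℤ) : ℕ :=
  (List.range p.length).countP (fun i => !p.getD i false && decide (dheight p i = k))

/-- Indicator that `x ≥ l + 1`. -/
def ind (l x : ℤ) : ℤ := if l + 1 ≤ x then 1 else 0

lemma dheight_succ (p : List Bool) (n : ℕ) (hn : n < p.length) :
    dheight p (n + 1) = dheight p n + dstep (p.getD n false) := by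
  unfold dheight
  rw [List.take_succ]
  have : p[n]? = some (p.getD n false) := by
    rw [List.getD_eq_getElem _ _ hn, List.getElem?_eq_getElem hn]
  rw [this]
  simp

lemma dheight_length (p : List Bool) : dheight p p.length = (p.map dstep).sum := by
  simp [dheight]

lemma tele (p : List Bool) (l : ℤ) (n : ℕ) (hn : n ≤ p.length) :
    ((List.range n).countP (fun i => p.getD i false && decide (dheight p i = l)) : ℤ)
      - ((List.range n).countP (fun i => !p.getD i false && decide (dheight p i = l + 1)) : ℤ)
    = ind l (dheight p n) - ind l 0 := by
  induction n with
  | zero => simp [dheight]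
  | succ n ih =>
    have hn' : n < p.length := hn
    have h1 := ih (le_of_lt hn')
    rw [List.range_succ, List.countP_append, List.countP_append,
      List.countP_singleton, List.countP_singleton]
    have hstep := dheight_succ p n hn'
    cases hb : p.getD n false <;> rw [hb] at hstep <;>
      simp only [dstep, Bool.false_eq_true, if_false, if_true] at hstep <;>
      simp only [hb, Bool.not_true, Bool.not_false, Bool.true_and, Bool.false_and,
        Bool.false_eq_true, if_false, decide_eq_true_eq] <;>
      rw [hstep] <;> push_cast <;> simp only [ind] at h1 ⊢ <;>
      split_ifs at h1 ⊢ <;> omega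

lemma balance (p : List Bool) (hp : IsDyck p) (l : ℤ) (hl : 0 ≤ l) :
    upCount p l = downCount p (l + 1) := by
  have h := tele p l p.length le_rfl
  rw [dheight_length, hp.1] at h
  simp only [ind] at h
  have h2 : ¬ (l + 1 ≤ (0 : ℤ)) := by omega
  rw [if_neg h2] at h
  have : (upCount p l : ℤ) = downCount p (l + 1) := by
    unfold upCount downCount; omega
  exact_mod_cast this

lemma countP_split {α : Type*} (l : List α) (pr q : α → Bool) :
    l.countP pr = l.countP (fun x => q x && pr x) + l.countP (fun x => !q x && pr x) := by
  induction l with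
  | nil => simp
  | cons a t ih =>
    simp only [List.countP_cons]
    cases hq : q a <;> cases hp : pr a <;> simp [hq, hp] <;> omega

lemma feet_split (p : List Bool) (hp : IsDyck p) (l : ℤ) :
    feet p l = upCount p l + downCount p l + (if l = 0 then 1 else 0) := by
  unfold feet upCount downCount
  rw [List.count_eq_countP, List.countP_map, List.range_succ, List.countP_append,
    List.countP_singleton]
  have hpred : ((fun x => x == l) ∘ dheight p) = (fun i => decide (dheight p i = l)) := rfl
  rw [hpred]
  rw [countP_split (List.range p.length) (fun i => decide (dheight p i = l))
    (fun i => p.getD i false)]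
  have hend : decide (dheight p p.length = l) = decide (l = 0) := by
    rw [dheight_length, hp.1]
    by_cases h : l = 0 <;> simp [h, eq_comm]
  show _ + (if decide (dheight p p.length = l) = true then 1 else 0) = _
  rw [hend]
  by_cases h : l = 0 <;> simp [h]

lemma down_zero (p : List Bool) (hp : IsDyck p) : downCount p 0 = 0 := by
  unfold downCount
  rw [List.countP_eq_zero]
  intro i hi
  simp only [List.mem_range] at hi
  simp only [Bool.and_eq_true, Bool.not_eq_true', decide_eq_true_eq, not_and]
  intro hb hh
  have h := dheight_succ p i hi
  rw [hb, hh] at h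
  have h2 := hp.2 (i + 1)
  simp [dstep] at h
  omega

lemma frame_zero (p : List Bool) (hp : IsDyck p) : frame p 0 = upCount p 0 + 1 := by
  have h := feet_split p hp 0
  rw [down_zero p hp] at h
  simpa [frame] using h

lemma frame_succ (p : List Bool) (hp : IsDyck p) (k : ℕ) :
    frame p (k + 1) = upCount p ((k : ℤ) + 1) + upCount p (k : ℤ) := by
  have h1 := feet_split p hp ((k : ℤ) + 1)
  have h2 := balance p hp (k : ℤ) (by positivity)
  have hne : ((k : ℤ) + 1) ≠ 0 := by positivity
  rw [if_neg hne, ← h2] at h1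
  have hc : ((k + 1 : ℕ) : ℤ) = (k : ℤ) + 1 := by push_cast; ring
  simpa [frame, hc] using h1

lemma stmt19_aux (p : List Bool) (hp : IsDyck p) (k : ℕ) :
    (upCount p (k : ℤ) : ℤ) =
      (∑ t ∈ Finset.range (k + 1), (-1) ^ (k - t) * (frame p t : ℤ)) + (-1) ^ (k + 1) := by
  induction k with
  | zero => simp [frame_zero p hp]
  | succ k ih =>
    have hrec := frame_succ p hp k
    have hs : ∑ t ∈ Finset.range (k + 1), (-1 : ℤ) ^ (k + 1 - t) * (frame p t : ℤ)
        = -∑ t ∈ Finset.range (k + 1), (-1) ^ (k - t) * (frame p t : ℤ) := by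
      rw [← Finset.sum_neg_distrib]
      apply Finset.sum_congr rfl
      intro t ht
      simp only [Finset.mem_range] at ht
      have h : k + 1 - t = (k - t) + 1 := by omega
      rw [h, pow_succ]
      ring
    rw [Finset.sum_range_succ, hs]
    have hcast : ((k + 1 : ℕ) : ℤ) = (k : ℤ) + 1 := by push_cast; ring
    rw [hcast]
    have hU : (upCount p ((k : ℤ) + 1) : ℤ) = (frame p (k + 1) : ℤ) - upCount p (k : ℤ) := by
      rw [hrec]; push_cast; ring
    rw [hU, ih, Nat.sub_self]
    simp only [pow_zero, one_mul, pow_succ, pow_zero]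
    ring

/-- For a Dyck path with frame (i_0,...,i_f,0,...), the number of up steps joining levels
k and k+1 is i_k - i_{k-1} + ... + (-1)^k i_0 + (-1)^(k+1); in particular it depends only
on the frame. -/
theorem stmt19 (p : List Bool) (hp : IsDyck p) (f : ℕ)
    (hf : frame p f ≠ 0) (hz : ∀ k > f, frame p k = 0) (k : ℕ) (hk : k < f) :
    (upCount p (k : ℤ) : ℤ) =
      (∑ t ∈ Finset.range (k + 1), (-1) ^ (k - t) * (frame p t : ℤ)) + (-1) ^ (k + 1) :=
  stmt19_aux p hp k
end
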